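/- For positive integers n, k with k ≥ 1 and n ≥ k+4, and for every integer m with 2 ≤ m ≤ n-k-2, the spectral radius of the digraph \vec{G}_n^{k,m} satisfies ρ(\vec{G}_n^{k,m}) = (n-2 + √(4m² - 4(n-k)m + n²))/2, and this is maximized over m exactly when m = 2 or m = n-k-2, giving value (n-2 + √((n-4)² + 8k))/2. -/

import Mathlib

open Matrix BigOperators

open scoped Classical in
/-- The adjacency matrix of a digraph given by its arc relation. -/
noncomputable def adjMatD {V : Type*} [Fintype V] (D : V → V → Prop) : Matrix V V ℝ :=
  Matrix.of fun a b => if D a b then (1 : ℝ) else 0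

/-- The spectral radius of a real matrix: the largest modulus of a (complex) eigenvalue. -/
noncomputable def specRadC {V : Type*} [Fintype V] [DecidableEq V] (M : Matrix V V ℝ) : ℝ :=
  sSup {r : ℝ | ∃ μ : ℂ,
    Module.End.HasEigenvalue (Matrix.toLin' (M.map (Complex.ofReal))) μ ∧ r = ‖μ‖}

/-- The digraph `\vec{G}_n^{k,m} = \vec{K}_k ∇ (\vec{K}_m ∪ \vec{K}_r)` (with `r = n-k-m`)
together with all arcs from the `\vec{K}_m` part to the `\vec{K}_r` part: there are arcs in
both directions between every pair of distinct vertices, except that there is no arc from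
the third part to the second part. -/
def GnkmRel (k m r : ℕ) :
    (Fin k ⊕ Fin m ⊕ Fin r) → (Fin k ⊕ Fin m ⊕ Fin r) → Prop :=
  fun a b => a ≠ b ∧ ¬ ∃ (x : Fin r) (y : Fin m), a = Sum.inr (Sum.inr x) ∧ b = Sum.inr (Sum.inl y)

open scoped Classical

noncomputable def Bmat (k m r : ℕ) : Matrix (Fin k ⊕ Fin m ⊕ Fin r) (Fin k ⊕ Fin m ⊕ Fin r) ℂ :=
  (adjMatD (GnkmRel k m r)).map Complex.ofReal

lemma Bmat_apply (k m r : ℕ) (a b : Fin k ⊕ Fin m ⊕ Fin r) :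
    Bmat k m r a b = (if a = b then 0 else 1) -
      (if (∃ (x : Fin r) (y : Fin m), a = Sum.inr (Sum.inr x) ∧ b = Sum.inr (Sum.inl y)) then 1 else 0) := by
  simp only [Bmat, adjMatD, Matrix.map_apply, Matrix.of_apply]
  by_cases h1 : a = b
  · have h2 : ¬ ∃ (x : Fin r) (y : Fin m), a = Sum.inr (Sum.inr x) ∧ b = Sum.inr (Sum.inl y) := by
      rintro ⟨x, y, hx, hy⟩; rw [← h1, hx] at hy; simp at hy
    rw [if_pos h1, if_neg h2, if_neg (show ¬ GnkmRel k m r a b from fun h => h.1 h1)]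
    norm_num
  · by_cases h2 : ∃ (x : Fin r) (y : Fin m), a = Sum.inr (Sum.inr x) ∧ b = Sum.inr (Sum.inl y)
    · rw [if_neg h1, if_pos h2, if_neg (show ¬ GnkmRel k m r a b from fun h => h.2 h2)]
      norm_num
    · rw [if_neg h1, if_neg h2, if_pos (show GnkmRel k m r a b from ⟨h1, h2⟩)]
      norm_num

lemma mulVec_Bmat (k m r : ℕ) (v : (Fin k ⊕ Fin m ⊕ Fin r) → ℂ) (a : Fin k ⊕ Fin m ⊕ Fin r) :
    (Bmat k m r).mulVec v a =
      (∑ b, v b) - v a -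
        (if ∃ x : Fin r, a = Sum.inr (Sum.inr x) then ∑ y : Fin m, v (Sum.inr (Sum.inl y)) else 0) := by
  have h0 : (Bmat k m r).mulVec v a = ∑ b, Bmat k m r a b * v b := rfl
  rw [h0]
  simp only [Bmat_apply, sub_mul]
  rw [Finset.sum_sub_distrib]
  congr 1
  · have h : ∀ b, ((if a = b then (0:ℂ) else 1) * v b) = v b - (if a = b then v b else 0) := by
      intro b; by_cases h : a = b <;> simp [h]
    rw [Finset.sum_congr rfl (fun b _ => h b), Finset.sum_sub_distrib, Finset.sum_ite_eq]
    simp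
  · by_cases hR : ∃ x : Fin r, a = Sum.inr (Sum.inr x)
    · obtain ⟨x0, rfl⟩ := hR
      rw [if_pos ⟨x0, rfl⟩, Fintype.sum_sum_type, Fintype.sum_sum_type]
      have h1 : ∀ i : Fin k,
          ((if (∃ (x : Fin r) (y : Fin m), (Sum.inr (Sum.inr x0) : Fin k ⊕ Fin m ⊕ Fin r) = Sum.inr (Sum.inr x) ∧ (Sum.inl i : Fin k ⊕ Fin m ⊕ Fin r) = Sum.inr (Sum.inl y)) then (1:ℂ) else 0) * v (Sum.inl i)) = 0 := by
        intro i; rw [if_neg, zero_mul]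
        rintro ⟨x, y, -, h⟩; exact absurd h (by simp)
      have h2 : ∀ y0 : Fin m,
          ((if (∃ (x : Fin r) (y : Fin m), (Sum.inr (Sum.inr x0) : Fin k ⊕ Fin m ⊕ Fin r) = Sum.inr (Sum.inr x) ∧ (Sum.inr (Sum.inl y0) : Fin k ⊕ Fin m ⊕ Fin r) = Sum.inr (Sum.inl y)) then (1:ℂ) else 0) * v (Sum.inr (Sum.inl y0))) = v (Sum.inr (Sum.inl y0)) := by
        intro y0; rw [if_pos ⟨x0, y0, rfl, rfl⟩, one_mul]
      have h3 : ∀ z : Fin r,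
          ((if (∃ (x : Fin r) (y : Fin m), (Sum.inr (Sum.inr x0) : Fin k ⊕ Fin m ⊕ Fin r) = Sum.inr (Sum.inr x) ∧ (Sum.inr (Sum.inr z) : Fin k ⊕ Fin m ⊕ Fin r) = Sum.inr (Sum.inl y)) then (1:ℂ) else 0) * v (Sum.inr (Sum.inr z))) = 0 := by
        intro z; rw [if_neg, zero_mul]
        rintro ⟨x, y, -, h⟩; exact absurd h (by simp)
      rw [Finset.sum_congr rfl (fun i _ => h1 i), Finset.sum_congr rfl (fun y _ => h2 y),
        Finset.sum_congr rfl (fun z _ => h3 z)]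
      simp
    · rw [if_neg hR, Finset.sum_eq_zero]
      intro b _
      rw [if_neg, zero_mul]
      rintro ⟨x, y, hx, -⟩; exact hR ⟨x, hx⟩

lemma eig_iff (k m r : ℕ) (hk : 1 ≤ k) (hm : 2 ≤ m) (hr : 1 ≤ r) (μ : ℂ) :
    Module.End.HasEigenvalue (Matrix.toLin' (Bmat k m r)) μ ↔
      (μ = -1 ∨ (μ+1)^2 - ((k:ℂ)+m+r)*(μ+1) + (m:ℂ)*(r:ℂ) = 0) := by
  have hchar : Module.End.HasEigenvalue (Matrix.toLin' (Bmat k m r)) μ ↔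
      ∃ v : (Fin k ⊕ Fin m ⊕ Fin r) → ℂ, v ≠ 0 ∧ (Bmat k m r).mulVec v = μ • v := by
    rw [Module.End.hasEigenvalue_iff, Submodule.ne_bot_iff]
    constructor
    · rintro ⟨v, hv, hv0⟩
      exact ⟨v, hv0, by rw [← Matrix.toLin'_apply]; exact Module.End.mem_eigenspace_iff.1 hv⟩
    · rintro ⟨v, hv0, hv⟩
      exact ⟨v, Module.End.mem_eigenspace_iff.2 (by rw [Matrix.toLin'_apply]; exact hv), hv0⟩
  rw [hchar]
  constructor
  · rintro ⟨v, hv0, hv⟩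
    by_cases hμ : μ = -1
    · exact Or.inl hμ
    right
    set S : ℂ := ∑ b, v b with hS
    set T : ℂ := ∑ y : Fin m, v (Sum.inr (Sum.inl y)) with hT
    have heq : ∀ a, (μ + 1) * v a =
        S - (if ∃ x : Fin r, a = Sum.inr (Sum.inr x) then T else 0) := by
      intro a
      have := congrFun hv a
      rw [mulVec_Bmat] at this
      rw [Pi.smul_apply, smul_eq_mul, ← hS, ← hT] at this
      linear_combination -this
    have hx0 : (μ + 1) ≠ 0 := fun h => hμ (by linear_combination h)
    have hKM : ∀ a, (¬ ∃ x : Fin r, a = Sum.inr (Sum.inr x)) → (μ+1) * v a = S := by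
      intro a ha; rw [heq a, if_neg ha, sub_zero]
    have hRe : ∀ z : Fin r, (μ+1) * v (Sum.inr (Sum.inr z)) = S - T := by
      intro z; rw [heq _, if_pos ⟨z, rfl⟩]
    have hTS : (μ+1) * T = m * S := by
      rw [hT, Finset.mul_sum]
      rw [Finset.sum_congr rfl (fun y _ => hKM _ (by rintro ⟨x, h⟩; simp at h))]
      simp [mul_comm]
    have hsplit : S = (∑ i : Fin k, v (Sum.inl i)) + ((∑ y : Fin m, v (Sum.inr (Sum.inl y)))
        + (∑ z : Fin r, v (Sum.inr (Sum.inr z)))) := by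
      rw [hS, Fintype.sum_sum_type, Fintype.sum_sum_type]
    have hKs : (μ+1) * (∑ i : Fin k, v (Sum.inl i)) = (k:ℂ) * S := by
      rw [Finset.mul_sum,
        Finset.sum_congr rfl (fun i _ => hKM (Sum.inl i) (by rintro ⟨x, h⟩; simp at h))]
      simp [mul_comm]
    have hMs : (μ+1) * (∑ y : Fin m, v (Sum.inr (Sum.inl y))) = (m:ℂ) * S := by
      rw [Finset.mul_sum,
        Finset.sum_congr rfl (fun y _ => hKM (Sum.inr (Sum.inl y)) (by rintro ⟨x, h⟩; simp at h))]
      simp [mul_comm]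
    have hRs : (μ+1) * (∑ z : Fin r, v (Sum.inr (Sum.inr z))) = (r:ℂ) * (S - T) := by
      rw [Finset.mul_sum, Finset.sum_congr rfl (fun z _ => hRe z)]
      simp [mul_comm]; ring
    have hSsum : (μ+1) * S = (k:ℂ)*S + (m:ℂ)*S + (r:ℂ)*(S - T) := by
      calc (μ+1) * S = (μ+1) * (∑ i : Fin k, v (Sum.inl i))
            + ((μ+1) * (∑ y : Fin m, v (Sum.inr (Sum.inl y)))
            + (μ+1) * (∑ z : Fin r, v (Sum.inr (Sum.inr z)))) := by rw [← mul_add, ← mul_add, ← hsplit]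
        _ = (k:ℂ)*S + (m:ℂ)*S + (r:ℂ)*(S - T) := by rw [hKs, hMs, hRs]; ring
    have hSne : S ≠ 0 := by
      intro hS0
      apply hv0
      have hT0 : T = 0 := by
        have := hTS; rw [hS0, mul_zero] at this
        exact (mul_eq_zero.1 this).resolve_left hx0
      funext a
      by_cases ha : ∃ x : Fin r, a = Sum.inr (Sum.inr x)
      · have := heq a; rw [if_pos ha, hS0, hT0, sub_zero] at this
        exact (mul_eq_zero.1 this).resolve_left hx0
      · have := hKM a ha; rw [hS0] at this
        have := (mul_eq_zero.1 this).resolve_left hx0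
        exact this
    have hfin : S * ((μ+1)^2 - ((k:ℂ)+m+r)*(μ+1) + (m:ℂ)*(r:ℂ)) = 0 := by
      linear_combination (μ+1) * hSsum - (r:ℂ) * hTS
    exact (mul_eq_zero.1 hfin).resolve_left hSne
  · rintro (rfl | hq)
    · -- eigenvalue -1
      set M0 : Fin k ⊕ Fin m ⊕ Fin r := Sum.inr (Sum.inl ⟨0, by omega⟩) with hM0
      set M1 : Fin k ⊕ Fin m ⊕ Fin r := Sum.inr (Sum.inl ⟨1, by omega⟩) with hM1
      have hne : M0 ≠ M1 := by simp [hM0, hM1, Fin.ext_iff]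
      set v : (Fin k ⊕ Fin m ⊕ Fin r) → ℂ :=
        fun b => (if b = M0 then 1 else 0) + (if b = M1 then -1 else 0) with hvdef
      refine ⟨v, ?_, ?_⟩
      · intro h
        have := congrFun h M0
        simp [hvdef, hne] at this
      · have hS : ∑ b, v b = 0 := by
          simp only [hvdef]
          rw [Finset.sum_add_distrib]
          simp [Finset.sum_ite_eq']
        have hT : ∑ y : Fin m, v (Sum.inr (Sum.inl y)) = 0 := by
          simp only [hvdef, hM0, hM1, Sum.inr.injEq, Sum.inl.injEq]
          rw [Finset.sum_add_distrib]
          simp [Finset.sum_ite_eq']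
        funext a
        rw [mulVec_Bmat, hS, hT, ite_self]
        simp only [Pi.smul_apply, smul_eq_mul]
        ring
    · -- quadratic root
      have hx0 : μ + 1 ≠ 0 := by
        intro h
        rw [h] at hq
        simp at hq
        rcases hq with h | h
        · exact absurd (Nat.cast_injective h) (by omega)
        · exact absurd (Nat.cast_injective h) (by omega)
      set x : ℂ := μ + 1 with hx
      set v : (Fin k ⊕ Fin m ⊕ Fin r) → ℂ :=
        Sum.elim (fun _ => x) (Sum.elim (fun _ => x) (fun _ => x - (m:ℂ))) with hvdef
      have hS : ∑ b, v b = x^2 := by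
        rw [Fintype.sum_sum_type, Fintype.sum_sum_type]
        simp only [hvdef, Sum.elim_inl, Sum.elim_inr, Finset.sum_const, Finset.card_univ,
          Fintype.card_fin, nsmul_eq_mul]
        linear_combination -hq
      have hT : ∑ y : Fin m, v (Sum.inr (Sum.inl y)) = (m:ℂ) * x := by
        simp [hvdef]
      refine ⟨v, ?_, ?_⟩
      · intro h
        have := congrFun h (Sum.inl ⟨0, by omega⟩)
        simp [hvdef] at this
        exact hx0 this
      · funext a
        rw [mulVec_Bmat, hS, hT]
        rcases a with i | y0 | z
        · rw [if_neg (by rintro ⟨x', h⟩; simp at h)]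
          simp only [hvdef, Sum.elim_inl, Pi.smul_apply, smul_eq_mul]
          rw [hx]; ring
        · rw [if_neg (by rintro ⟨x', h⟩; simp at h)]
          simp only [hvdef, Sum.elim_inr, Sum.elim_inl, Pi.smul_apply, smul_eq_mul]
          rw [hx]; ring
        · rw [if_pos ⟨z, rfl⟩]
          simp only [hvdef, Sum.elim_inr, Pi.smul_apply, smul_eq_mul]
          rw [hx]; ring

lemma specRad_eq (k m r : ℕ) (hk : 1 ≤ k) (hm : 2 ≤ m) (hr : 1 ≤ r) :
    sSup {t : ℝ | ∃ μ : ℂ,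
        Module.End.HasEigenvalue (Matrix.toLin' (Bmat k m r)) μ ∧ t = ‖μ‖}
      = ((k:ℝ)+m+r - 2 + Real.sqrt (((k:ℝ)+m+r)^2 - 4*m*r)) / 2 := by
  set N : ℝ := (k:ℝ)+m+r with hN
  have hk1 : (1:ℝ) ≤ (k:ℝ) := by exact_mod_cast hk
  have hm1 : (2:ℝ) ≤ (m:ℝ) := by exact_mod_cast hm
  have hr1 : (1:ℝ) ≤ (r:ℝ) := by exact_mod_cast hr
  have hd : 0 ≤ N^2 - 4*m*r := by nlinarith [sq_nonneg ((m:ℝ) - r)]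
  set s : ℝ := Real.sqrt (N^2 - 4*m*r) with hs
  have hs2 : s^2 = N^2 - 4*m*r := Real.sq_sqrt hd
  have hs0 : 0 ≤ s := Real.sqrt_nonneg _
  set l1 : ℝ := (N - 2 + s) / 2 with hl1
  set l2 : ℝ := (N - 2 - s) / 2 with hl2
  have hN4 : 4 ≤ N := by linarith
  have hl1ge : 1 ≤ l1 := by rw [hl1]; linarith
  have hl10 : 0 ≤ l1 := by linarith
  have key : ∀ μ : ℂ, (μ+1)^2 - ((k:ℂ)+m+r)*(μ+1) + (m:ℂ)*(r:ℂ)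
      = (μ - (l1:ℂ)) * (μ - (l2:ℂ)) := by
    intro μ
    have hsC : (s:ℂ)^2 = ((k:ℂ)+m+r)^2 - 4*(m:ℂ)*(r:ℂ) := by
      have := hs2
      rw [hN] at this
      exact_mod_cast congrArg (Complex.ofReal) this
    rw [hl1, hl2, hN]
    push_cast
    linear_combination (1/4 : ℂ) * hsC
  have hiff : ∀ μ : ℂ, Module.End.HasEigenvalue (Matrix.toLin' (Bmat k m r)) μ ↔
      (μ = -1 ∨ μ = (l1:ℂ) ∨ μ = (l2:ℂ)) := by
    intro μ
    rw [eig_iff k m r hk hm hr, key μ, mul_eq_zero, sub_eq_zero, sub_eq_zero]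
  apply le_antisymm
  · apply csSup_le
    · exact ⟨‖((l1:ℝ):ℂ)‖, (l1:ℂ), (hiff _).2 (Or.inr (Or.inl rfl)), rfl⟩
    · rintro x ⟨μ, hμ, rfl⟩
      rcases (hiff μ).1 hμ with rfl | rfl | rfl
      · simpa using hl1ge
      · rw [Complex.norm_real, Real.norm_eq_abs, abs_of_nonneg hl10]
      · rw [Complex.norm_real, Real.norm_eq_abs]
        rw [abs_le]
        constructor <;> [skip; skip] <;> rw [hl2, hl1] <;> linarith
  · apply le_csSup
    · refine ⟨l1, ?_⟩
      rintro x ⟨μ, hμ, rfl⟩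
      rcases (hiff μ).1 hμ with rfl | rfl | rfl
      · simpa using hl1ge
      · rw [Complex.norm_real, Real.norm_eq_abs, abs_of_nonneg hl10]
      · rw [Complex.norm_real, Real.norm_eq_abs, abs_le]
        constructor <;> rw [hl2, hl1] <;> linarith
    · exact ⟨(l1:ℂ), (hiff _).2 (Or.inr (Or.inl rfl)),
        by rw [Complex.norm_real, Real.norm_eq_abs, abs_of_nonneg hl10]⟩

theorem stmt12 (n k : ℕ) (hk : 1 ≤ k) (hn : k + 4 ≤ n) :
    ∀ m : ℕ, 2 ≤ m → m + 2 ≤ n - k →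
      specRadC (adjMatD (GnkmRel k m (n - k - m))) =
        ((n : ℝ) - 2 +
          Real.sqrt (4 * (m : ℝ) ^ 2 - 4 * ((n : ℝ) - k) * m + (n : ℝ) ^ 2)) / 2 ∧
      specRadC (adjMatD (GnkmRel k m (n - k - m))) ≤
        ((n : ℝ) - 2 + Real.sqrt (((n : ℝ) - 4) ^ 2 + 8 * k)) / 2 ∧
      (specRadC (adjMatD (GnkmRel k m (n - k - m))) =
          ((n : ℝ) - 2 + Real.sqrt (((n : ℝ) - 4) ^ 2 + 8 * k)) / 2 ↔
        m = 2 ∨ m = n - k - 2) := by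
  intro m hm2 hmn
  have hkn : k ≤ n := by omega
  have hcast : ((n - k - m : ℕ) : ℝ) = (n:ℝ) - k - m := by
    rw [Nat.sub_sub, Nat.cast_sub (by omega : k + m ≤ n)]
    push_cast; ring
  have hkR : (1:ℝ) ≤ (k:ℝ) := by exact_mod_cast hk
  have hknR : (k:ℝ) ≤ (n:ℝ) := by exact_mod_cast hkn
  have hm2R : (2:ℝ) ≤ (m:ℝ) := by exact_mod_cast hm2
  have hmnR : (m:ℝ) + 2 ≤ (n:ℝ) - k := by
    have h := hmn
    have : ((m + 2 : ℕ) : ℝ) ≤ ((n - k : ℕ) : ℝ) := by exact_mod_cast h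
    rwa [Nat.cast_sub hkn, Nat.cast_add, Nat.cast_ofNat] at this
  -- part 1
  have h1 : specRadC (adjMatD (GnkmRel k m (n - k - m))) =
      ((n : ℝ) - 2 +
        Real.sqrt (4 * (m : ℝ) ^ 2 - 4 * ((n : ℝ) - k) * m + (n : ℝ) ^ 2)) / 2 := by
    rw [show specRadC (adjMatD (GnkmRel k m (n - k - m))) =
        sSup {t : ℝ | ∃ μ : ℂ,
          Module.End.HasEigenvalue (Matrix.toLin' (Bmat k m (n - k - m))) μ ∧
            t = ‖μ‖} from rfl,
      specRad_eq k m (n - k - m) hk hm2 (by omega), hcast]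
    have e : ((k:ℝ) + m + ((n:ℝ) - k - m))^2 - 4*(m:ℝ)*((n:ℝ) - k - m)
        = 4 * (m : ℝ) ^ 2 - 4 * ((n : ℝ) - k) * m + (n : ℝ) ^ 2 := by ring
    rw [e]
    ring
  have hA0 : (0:ℝ) ≤ 4 * (m : ℝ) ^ 2 - 4 * ((n : ℝ) - k) * m + (n : ℝ) ^ 2 := by
    nlinarith [sq_nonneg (2*(m:ℝ) - ((n:ℝ) - k))]
  have hB0 : (0:ℝ) ≤ ((n : ℝ) - 4) ^ 2 + 8 * k := by positivity
  have hAB : 4 * (m : ℝ) ^ 2 - 4 * ((n : ℝ) - k) * m + (n : ℝ) ^ 2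
      ≤ ((n : ℝ) - 4) ^ 2 + 8 * k := by
    nlinarith [mul_nonneg (by linarith : (0:ℝ) ≤ (m:ℝ) - 2)
      (by linarith : (0:ℝ) ≤ (n:ℝ) - k - 2 - m)]
  have hsq : Real.sqrt (4 * (m : ℝ) ^ 2 - 4 * ((n : ℝ) - k) * m + (n : ℝ) ^ 2)
      ≤ Real.sqrt (((n : ℝ) - 4) ^ 2 + 8 * k) := Real.sqrt_le_sqrt hAB
  refine ⟨h1, by rw [h1]; linarith, ?_⟩
  rw [h1]
  constructor
  · intro heq
    have hsqeq : Real.sqrt (4 * (m : ℝ) ^ 2 - 4 * ((n : ℝ) - k) * m + (n : ℝ) ^ 2)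
        = Real.sqrt (((n : ℝ) - 4) ^ 2 + 8 * k) := by linarith
    have hABeq := (Real.sqrt_inj hA0 hB0).1 hsqeq
    have hP : ((m:ℝ) - 2) * ((n:ℝ) - k - 2 - m) = 0 := by
      linear_combination (-1/4 : ℝ) * hABeq
    rcases mul_eq_zero.1 hP with h | h
    · left
      have : (m:ℝ) = 2 := by linarith
      exact_mod_cast this
    · right
      have : (m:ℝ) = ((n - k - 2 : ℕ) : ℝ) := by
        rw [Nat.sub_sub, Nat.cast_sub (by omega : k + 2 ≤ n)]
        push_cast; linarith
      exact_mod_cast this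
  · rintro (rfl | hm)
    · have e : 4 * ((2:ℕ) : ℝ) ^ 2 - 4 * ((n : ℝ) - k) * ((2:ℕ):ℝ) + (n : ℝ) ^ 2
          = ((n : ℝ) - 4) ^ 2 + 8 * k := by push_cast; ring
      rw [e]
    · have hmR : (m:ℝ) = (n:ℝ) - k - 2 := by
        rw [hm, Nat.sub_sub, Nat.cast_sub (by omega : k + 2 ≤ n)]
        push_cast; ring
      have e : 4 * (m : ℝ) ^ 2 - 4 * ((n : ℝ) - k) * (m:ℝ) + (n : ℝ) ^ 2
          = ((n : ℝ) - 4) ^ 2 + 8 * k := by rw [hmR]; ring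
      rw [e]
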